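/- (Global hyperbolicity of Minkowski space-time: compactness of causal diamonds.) For all p, q ∈ ℝ^{1+n}, the set J^+(p) ∩ J^-(q) is a compact subset of ℝ^{1+n}. -/

import Mathlib

open Set MeasureTheory Filter Topology
open scoped RealInnerProductSpace

noncomputable section

/-- Minkowski space-time `ℝ^{1+n} = ℝ × ℝ^n`. -/
abbrev Mink (n : ℕ) : Type := ℝ × EuclideanSpace ℝ (Fin n)

/-- A vector is timelike future-directed if `v⁰ > |v⃗|`. -/
def timelikeFD {n : ℕ} (v : Mink n) : Prop := ‖v.2‖ < v.1

/-- A vector is causal future-directed if `v ≠ 0` and `v⁰ ≥ |v⃗|`. -/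
def causalFD {n : ℕ} (v : Mink n) : Prop := v ≠ 0 ∧ ‖v.2‖ ≤ v.1

/-- A vector is null future-directed if `v ≠ 0` and `v⁰ = |v⃗|`. -/
def nullFD {n : ℕ} (v : Mink n) : Prop := v ≠ 0 ∧ ‖v.2‖ = v.1

/-- A vector is causal past-directed if `-v` is causal future-directed. -/
def causalPD {n : ℕ} (v : Mink n) : Prop := causalFD (-v)

/-- The Minkowski bilinear form `η(x,y) = -x⁰y⁰ + ⟨x⃗,y⃗⟩`. -/
def minkBF {n : ℕ} (x y : Mink n) : ℝ := -(x.1 * y.1) + ⟪x.2, y.2⟫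

/-- The Euclidean norm on `ℝ^{1+n}`. -/
def eNorm {n : ℕ} (v : Mink n) : ℝ := Real.sqrt (v.1 ^ 2 + ‖v.2‖ ^ 2)

/-- A future-directed causal curve defined on `S ⊆ ℝ`: locally Lipschitz, with
almost-everywhere derivative causal future-directed. -/
def IsCausalCurveOn {n : ℕ} (γ : ℝ → Mink n) (S : Set ℝ) : Prop :=
  (∀ a b : ℝ, Icc a b ⊆ S → ∃ K : NNReal, LipschitzOnWith K γ (Icc a b)) ∧
  (∀ᵐ s ∂(volume.restrict S), ∃ v : Mink n, HasDerivWithinAt γ v S s ∧ causalFD v)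

/-- A future-directed timelike curve defined on `S ⊆ ℝ`. -/
def IsTimelikeCurveOn {n : ℕ} (γ : ℝ → Mink n) (S : Set ℝ) : Prop :=
  (∀ a b : ℝ, Icc a b ⊆ S → ∃ K : NNReal, LipschitzOnWith K γ (Icc a b)) ∧
  (∀ᵐ s ∂(volume.restrict S), ∃ v : Mink n, HasDerivWithinAt γ v S s ∧ timelikeFD v)

/-- A past-directed causal curve defined on `S ⊆ ℝ`. -/
def IsPastCausalCurveOn {n : ℕ} (γ : ℝ → Mink n) (S : Set ℝ) : Prop :=
  (∀ a b : ℝ, Icc a b ⊆ S → ∃ K : NNReal, LipschitzOnWith K γ (Icc a b)) ∧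
  (∀ᵐ s ∂(volume.restrict S), ∃ v : Mink n, HasDerivWithinAt γ v S s ∧ causalPD v)

/-- `chron p q`: there is a future-directed timelike curve from `p` to `q`. -/
def chron {n : ℕ} (p q : Mink n) : Prop :=
  ∃ (a b : ℝ) (γ : ℝ → Mink n), a < b ∧ IsTimelikeCurveOn γ (Icc a b) ∧ γ a = p ∧ γ b = q

/-- `caus p q`: `q = p`, or there is a future-directed causal curve from `p` to `q`. -/
def caus {n : ℕ} (p q : Mink n) : Prop :=
  p = q ∨ ∃ (a b : ℝ) (γ : ℝ → Mink n), a < b ∧ IsCausalCurveOn γ (Icc a b) ∧ γ a = p ∧ γ b = q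

/-- `causPast p q`: `q = p`, or there is a past-directed causal curve from `p` to `q`. -/
def causPast {n : ℕ} (p q : Mink n) : Prop :=
  p = q ∨ ∃ (a b : ℝ) (γ : ℝ → Mink n), a < b ∧ IsPastCausalCurveOn γ (Icc a b) ∧ γ a = p ∧ γ b = q

/-- The timelike future `I⁺(U)`. -/
def Iplus {n : ℕ} (U : Set (Mink n)) : Set (Mink n) := {q | ∃ p ∈ U, chron p q}

/-- The causal future `J⁺(U)`. -/
def Jplus {n : ℕ} (U : Set (Mink n)) : Set (Mink n) := {q | ∃ p ∈ U, caus p q}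

/-- The causal past `J⁻(U)`. -/
def Jminus {n : ℕ} (U : Set (Mink n)) : Set (Mink n) := {q | ∃ p ∈ U, causPast p q}

/-- An inextendible future-directed timelike curve: defined on all of `ℝ`, locally
Lipschitz, parameterized by Euclidean arclength, with a.e. timelike future derivative. -/
def IsInextTimelike {n : ℕ} (γ : ℝ → Mink n) : Prop :=
  LocallyLipschitz γ ∧
  ∀ᵐ s : ℝ, ∃ v : Mink n, HasDerivAt γ v s ∧ timelikeFD v ∧ eNorm v = 1



/-- A Lipschitz function on `[a,b]` with a.e. nonnegative derivative is monotone
(endpoint version). -/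
lemma mono_of_ae_deriv_nonneg {f : ℝ → ℝ} {a b : ℝ} {K : NNReal} (hab : a ≤ b)
    (hlip : LipschitzOnWith K f (Icc a b))
    (hder : ∀ᵐ s ∂(volume.restrict (Icc a b)),
      ∃ v : ℝ, HasDerivWithinAt f v (Icc a b) s ∧ 0 ≤ v) :
    f a ≤ f b := by
  have hKnn : (0:ℝ) ≤ (K:ℝ) := K.2
  have hlipR : ∀ x ∈ Icc a b, ∀ y ∈ Icc a b, |f x - f y| ≤ (K:ℝ) * |x - y| := by
    intro x hx y hy
    have := hlip.dist_le_mul x hx y hy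
    rwa [Real.dist_eq, Real.dist_eq] at this
  have main : ∀ ε : ℝ, 0 < ε → f a ≤ f b + ε * ((b - a) + (K:ℝ) + 1) := by
    intro ε hε
    -- the bad (non-differentiability) set is null; cover it by a small open set U.
    have hN : volume ({s | ¬ ∃ v : ℝ, HasDerivWithinAt f v (Icc a b) s ∧ 0 ≤ v} ∩ Icc a b)
        = 0 := by
      have h := hder
      rw [ae_iff] at h
      rwa [Measure.restrict_apply' measurableSet_Icc] at h
    obtain ⟨U, hNU, hUopen, hUvol⟩ :=
      Set.exists_isOpen_lt_of_lt _ (ENNReal.ofReal ε)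
        (by rw [hN]; exact ENNReal.ofReal_pos.mpr hε)
    have hUfin : ∀ t : ℝ, volume (U ∩ Ioc a t) ≠ ⊤ :=
      fun t => ((measure_mono inter_subset_left).trans_lt
        (hUvol.trans ENNReal.ofReal_lt_top)).ne
    set G : ℝ → ℝ := fun t => (volume (U ∩ Ioc a t)).toReal with hGdef
    have hGmono : ∀ {s t : ℝ}, s ≤ t → G s ≤ G t := by
      intro s t hst
      exact ENNReal.toReal_mono (hUfin t)
        (measure_mono (inter_subset_inter_right _ (Ioc_subset_Ioc_right hst)))
    have hGlip : ∀ {s t : ℝ}, s ≤ t → G t - G s ≤ t - s := by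
      intro s t hst
      have h1 : volume (U ∩ Ioc a t) ≤ volume (U ∩ Ioc a s) + volume (Ioc s t) := by
        refine (measure_mono ?_).trans (measure_union_le _ _)
        rintro x ⟨hxU, hxa, hxt⟩
        rcases le_or_gt x s with h | h
        · exact Or.inl ⟨hxU, hxa, h⟩
        · exact Or.inr ⟨h, hxt⟩
      have h2 := ENNReal.toReal_mono
        (ENNReal.add_ne_top.mpr ⟨hUfin s, by rw [Real.volume_Ioc]; exact ENNReal.ofReal_ne_top⟩) h1
      rw [ENNReal.toReal_add (hUfin s) (by rw [Real.volume_Ioc]; exact ENNReal.ofReal_ne_top),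
        Real.volume_Ioc, ENNReal.toReal_ofReal (by linarith)] at h2
      simp only [hGdef] at *
      linarith
    have hGgrow : ∀ {s t : ℝ}, a ≤ s → s ≤ t → Ioc s t ⊆ U → G s + (t - s) ≤ G t := by
      intro s t has hst hsub
      have hdisj : Disjoint (U ∩ Ioc a s) (Ioc s t) := by
        apply Set.disjoint_left.mpr
        rintro x ⟨_, _, hxs⟩ ⟨hsx, _⟩
        exact absurd hxs (not_le.mpr hsx)
      have h1 : volume (U ∩ Ioc a s) + volume (Ioc s t) ≤ volume (U ∩ Ioc a t) := by
        rw [← measure_union hdisj measurableSet_Ioc]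
        apply measure_mono
        rintro x (⟨hxU, hxa, hxs⟩ | hx)
        · exact ⟨hxU, hxa, hxs.trans hst⟩
        · exact ⟨hsub hx, lt_of_le_of_lt has hx.1, hx.2⟩
      have h2 := ENNReal.toReal_mono (hUfin t) h1
      rw [ENNReal.toReal_add (hUfin s) (by rw [Real.volume_Ioc]; exact ENNReal.ofReal_ne_top),
        Real.volume_Ioc, ENNReal.toReal_ofReal (by linarith)] at h2
      simp only [hGdef] at *
      linarith
    have hGcont : Continuous G := by
      apply LipschitzWith.continuous (K := 1)
      apply LipschitzWith.of_dist_le_mul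
      intro s t
      rw [Real.dist_eq, Real.dist_eq, NNReal.coe_one, one_mul]
      rcases le_total s t with h | h
      · have h1 := hGmono h; have h2 := hGlip h
        rw [abs_of_nonpos (by linarith), abs_of_nonpos (by linarith)]; linarith
      · have h1 := hGmono h; have h2 := hGlip h
        rw [abs_of_nonneg (by linarith), abs_of_nonneg (by linarith)]; linarith
    set F : ℝ → ℝ := fun t => f t + ε * (t - a) + ((K:ℝ) + 1) * G t with hFdef
    have hFcont : ContinuousOn F (Icc a b) := by
      apply ContinuousOn.add
      apply ContinuousOn.add hlip.continuousOn
      · exact (continuous_const.mul (continuous_id.sub continuous_const)).continuousOn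
      · exact (continuous_const.mul hGcont).continuousOn
    -- local rightward increase
    have loc : ∀ c, c ∈ Icc a b → c < b → ∃ t, c < t ∧ t ≤ b ∧ F c ≤ F t := by
      intro c hc hcb
      by_cases hcU : c ∈ U
      · obtain ⟨r, hr, hball⟩ := Metric.isOpen_iff.mp hUopen c hcU
        refine ⟨min (c + r / 2) b, lt_min (by linarith) hcb, min_le_right _ _, ?_⟩
        set t := min (c + r / 2) b with ht
        have hct : c < t := lt_min (by linarith) hcb
        have htb : t ≤ b := min_le_right _ _
        have hsub : Ioc c t ⊆ U := by
          intro x hx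
          apply hball
          rw [Metric.mem_ball, Real.dist_eq, abs_of_pos (sub_pos.mpr hx.1)]
          have : x ≤ c + r / 2 := hx.2.trans (min_le_left _ _)
          linarith
        have hgrow := hGgrow hc.1 hct.le hsub
        have h1 := hlipR t ⟨hc.1.trans hct.le, htb⟩ c hc
        rw [abs_of_pos (sub_pos.mpr hct)] at h1
        have h2 := neg_le_of_abs_le h1
        have h3 : ((K:ℝ) + 1) * (G c + (t - c)) ≤ ((K:ℝ) + 1) * G t :=
          mul_le_mul_of_nonneg_left hgrow (by positivity)
        simp only [hFdef]
        nlinarith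
      · have hP : ∃ v, HasDerivWithinAt f v (Icc a b) c ∧ 0 ≤ v := by
          by_contra hPc
          exact hcU (hNU ⟨hPc, hc⟩)
        obtain ⟨v, hv, hv0⟩ := hP
        rw [hasDerivWithinAt_iff_tendsto_slope] at hv
        have hev : ∀ᶠ x in 𝓝[Icc a b \ {c}] c, -ε < slope f c x :=
          hv.eventually (eventually_gt_nhds (by linarith))
        have hmono : 𝓝[Ioc c b] c ≤ 𝓝[Icc a b \ {c}] c := by
          apply nhdsWithin_mono
          intro x hx
          exact ⟨⟨hc.1.trans hx.1.le, hx.2⟩, by simp [hx.1.ne']⟩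
        have : NeBot (𝓝[Ioc c b] c) := left_nhdsWithin_Ioc_neBot hcb
        obtain ⟨t, hslope, htmem⟩ :=
          ((hev.filter_mono hmono).and eventually_mem_nhdsWithin).exists
        refine ⟨t, htmem.1, htmem.2, ?_⟩
        rw [slope_def_field] at hslope
        have h4 : -ε * (t - c) < f t - f c :=
          (lt_div_iff₀ (sub_pos.mpr htmem.1)).mp hslope
        have h5 : ((K:ℝ) + 1) * G c ≤ ((K:ℝ) + 1) * G t :=
          mul_le_mul_of_nonneg_left (hGmono htmem.1.le) (by positivity)
        simp only [hFdef]
        nlinarith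
    -- global: F a ≤ F b via sSup
    have hFab : F a ≤ F b := by
      set A := Icc a b ∩ F ⁻¹' (Ici (F a)) with hA
      have hAne : a ∈ A := ⟨⟨le_refl a, hab⟩, le_refl (F a)⟩
      have hAbdd : BddAbove A := ⟨b, fun t ht => ht.1.2⟩
      set c := sSup A with hcdef
      have hac : a ≤ c := le_csSup hAbdd hAne
      have hcb : c ≤ b := csSup_le ⟨a, hAne⟩ (fun t ht => ht.1.2)
      have hclosed : IsClosed A :=
        hFcont.preimage_isClosed_of_isClosed isClosed_Icc isClosed_Ici
      have hcA : c ∈ A := hclosed.closure_subset (csSup_mem_closure ⟨a, hAne⟩ hAbdd)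
      rcases eq_or_lt_of_le hcb with hchb | hchb
      · exact hchb ▸ hcA.2
      · obtain ⟨t, hct, htb, hFct⟩ := loc c ⟨hac, hcb⟩ hchb
        have htA : t ∈ A := ⟨⟨hac.trans hct.le, htb⟩, le_trans hcA.2 hFct⟩
        exact absurd (le_csSup hAbdd htA) (not_le.mpr hct)
    -- conclude the ε-estimate
    have hGa : G a = 0 := by simp [hGdef]
    have hGb : G b ≤ ε := by
      apply ENNReal.toReal_le_of_le_ofReal hε.le
      exact ((measure_mono inter_subset_left).trans hUvol.le)
    simp only [hFdef, hGa, sub_self, mul_zero, add_zero] at hFab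
    have h6 : ((K:ℝ) + 1) * G b ≤ ((K:ℝ) + 1) * ε :=
      mul_le_mul_of_nonneg_left hGb (by positivity)
    nlinarith
  by_contra h
  push_neg at h
  have hC : (0:ℝ) < (b - a) + (K:ℝ) + 1 := by linarith
  have h7 := main ((f a - f b) / (2 * ((b - a) + (K:ℝ) + 1)))
    (div_pos (by linarith) (by linarith))
  rw [div_mul_eq_mul_div, mul_comm] at h7
  have h8 : (b - a + (K:ℝ) + 1) * (f a - f b) / (2 * (b - a + (K:ℝ) + 1)) = (f a - f b) / 2 := by
    field_simp
  rw [h8] at h7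
  linarith


lemma causal_curve_est {n : ℕ} {γ : ℝ → Mink n} {a b : ℝ} (hab : a ≤ b)
    (hγ : IsCausalCurveOn γ (Icc a b)) :
    ‖(γ b).2 - (γ a).2‖ ≤ (γ b).1 - (γ a).1 := by
  have key : ∀ u : EuclideanSpace ℝ (Fin n), ‖u‖ ≤ 1 →
      ⟪u, (γ b).2⟫ - ⟪u, (γ a).2⟫ ≤ (γ b).1 - (γ a).1 := by
    intro u hu
    set L : Mink n →L[ℝ] ℝ :=
      ContinuousLinearMap.fst ℝ ℝ (EuclideanSpace ℝ (Fin n)) -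
        (innerSL ℝ u).comp (ContinuousLinearMap.snd ℝ ℝ (EuclideanSpace ℝ (Fin n))) with hL
    have hLapp : ∀ x : Mink n, L x = x.1 - ⟪u, x.2⟫ := fun x => rfl
    obtain ⟨K, hK⟩ := hγ.1 a b Subset.rfl
    have hlip : LipschitzOnWith (‖L‖₊ * K) (fun s => L (γ s)) (Icc a b) :=
      L.lipschitz.comp_lipschitzOnWith hK
    have hder : ∀ᵐ s ∂(volume.restrict (Icc a b)),
        ∃ v : ℝ, HasDerivWithinAt (fun s => L (γ s)) v (Icc a b) s ∧ 0 ≤ v := by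
      filter_upwards [hγ.2] with s hs
      obtain ⟨v, hv, hcv⟩ := hs
      refine ⟨L v, L.hasFDerivAt.comp_hasDerivWithinAt s hv, ?_⟩
      rw [hLapp]
      have h1 : ⟪u, v.2⟫ ≤ ‖u‖ * ‖v.2‖ := real_inner_le_norm u v.2
      have h2 : ‖v.2‖ ≤ v.1 := hcv.2
      nlinarith [norm_nonneg v.2]
    have := mono_of_ae_deriv_nonneg hab hlip hder
    simp only [hLapp] at this
    linarith
  by_cases hd : (γ b).2 = (γ a).2
  · rw [hd]
    simpa using key 0 (by simp)
  · set d := (γ b).2 - (γ a).2 with hdd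
    have hdne : ‖d‖ ≠ 0 := norm_ne_zero_iff.mpr (sub_ne_zero.mpr hd)
    have h := key (‖d‖⁻¹ • d) (by rw [norm_smul, norm_inv, norm_norm,
      inv_mul_cancel₀ hdne])
    have h2 : ⟪‖d‖⁻¹ • d, (γ b).2⟫ - ⟪‖d‖⁻¹ • d, (γ a).2⟫ = ‖d‖ := by
      rw [← inner_sub_right, ← hdd, real_inner_smul_left, real_inner_self_eq_norm_sq]
      field_simp
    rwa [h2] at h

lemma past_curve_est {n : ℕ} {γ : ℝ → Mink n} {a b : ℝ} (hab : a ≤ b)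
    (hγ : IsPastCausalCurveOn γ (Icc a b)) :
    ‖(γ a).2 - (γ b).2‖ ≤ (γ a).1 - (γ b).1 := by
  have hneg : IsCausalCurveOn (fun s => -γ s) (Icc a b) := by
    constructor
    · intro a' b' hsub
      obtain ⟨K, hK⟩ := hγ.1 a' b' hsub
      refine ⟨K, fun x hx y hy => ?_⟩
      simpa only [edist_neg_neg] using hK hx hy
    · filter_upwards [hγ.2] with s hs
      obtain ⟨v, hv, hcv⟩ := hs
      exact ⟨-v, hv.neg, hcv⟩
  have h := causal_curve_est hab hneg
  simp only [Prod.snd_neg, Prod.fst_neg, neg_sub_neg] at h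
  linarith [h, (by rw [← neg_sub, norm_neg] : ‖(γ a).2 - (γ b).2‖ = ‖(γ b).2 - (γ a).2‖)]

lemma line_lipschitz {n : ℕ} (p v : Mink n) (a' b' : ℝ) :
    ∃ K : NNReal, LipschitzOnWith K (fun s : ℝ => p + s • v) (Icc a' b') := by
  refine ⟨‖v‖₊, LipschitzOnWith.of_dist_le_mul fun s _ t _ => ?_⟩
  rw [dist_eq_norm, add_sub_add_left_eq_sub, ← sub_smul, norm_smul, Real.norm_eq_abs,
    coe_nnnorm, Real.dist_eq]
  exact le_of_eq (mul_comm _ _)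

lemma line_hasDeriv {n : ℕ} (p v : Mink n) (S : Set ℝ) (s : ℝ) :
    HasDerivWithinAt (fun s : ℝ => p + s • v) v S s := by
  have h1 : HasDerivAt (fun t : ℝ => p + t • v) v s := by
    simpa using ((hasDerivAt_id s).smul_const v).const_add p
  exact h1.hasDerivWithinAt

lemma caus_of_cone {n : ℕ} {p x : Mink n} (h : ‖x.2 - p.2‖ ≤ x.1 - p.1) : caus p x := by
  rcases eq_or_ne p x with rfl | hne
  · exact Or.inl rfl
  · refine Or.inr ⟨0, 1, fun s => p + s • (x - p), one_pos,
      ⟨fun a' b' _ => line_lipschitz p (x - p) a' b',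
        Filter.Eventually.of_forall fun s => ⟨x - p, line_hasDeriv p (x - p) _ s,
          sub_ne_zero.mpr (Ne.symm hne), by simpa using h⟩⟩, by simp, by simp⟩

lemma causPast_of_cone {n : ℕ} {q x : Mink n} (h : ‖x.2 - q.2‖ ≤ q.1 - x.1) :
    causPast q x := by
  rcases eq_or_ne q x with rfl | hne
  · exact Or.inl rfl
  · refine Or.inr ⟨0, 1, fun s => q + s • (x - q), one_pos,
      ⟨fun a' b' _ => line_lipschitz q (x - q) a' b',
        Filter.Eventually.of_forall fun s => ⟨x - q, line_hasDeriv q (x - q) _ s, ?_⟩⟩,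
      by simp, by simp⟩
    refine ⟨neg_ne_zero.mpr (sub_ne_zero.mpr (Ne.symm hne)), ?_⟩
    have h1 : (-(x - q)).2 = -(x.2 - q.2) := rfl
    have h2 : (-(x - q)).1 = -(x.1 - q.1) := rfl
    rw [h1, h2, norm_neg]
    linarith


/-- global hyperbolicity of Minkowski space-time: all causal diamonds
`J⁺(p) ∩ J⁻(q)` are compact. -/
theorem minkowski_causal_diamond_compact (n : ℕ) (p q : Mink n) :
    IsCompact (Jplus ({p} : Set (Mink n)) ∩ Jminus ({q} : Set (Mink n))) := by
  have hset : Jplus ({p} : Set (Mink n)) ∩ Jminus ({q} : Set (Mink n)) =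
      {x : Mink n | ‖x.2 - p.2‖ ≤ x.1 - p.1} ∩ {x : Mink n | ‖x.2 - q.2‖ ≤ q.1 - x.1} := by
    ext x
    constructor
    · rintro ⟨⟨p', hp', hc⟩, ⟨q', hq', hcp⟩⟩
      rw [mem_singleton_iff] at hp' hq'
      subst hp'; subst hq'
      constructor
      · rcases hc with rfl | ⟨a, b, γ, hab, hγ, ha, hb⟩
        · simp
        · have := causal_curve_est hab.le hγ
          rw [ha, hb] at this
          exact this
      · rcases hcp with rfl | ⟨a, b, γ, hab, hγ, ha, hb⟩
        · simp
        · have := past_curve_est hab.le hγ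
          rw [ha, hb] at this
          rw [mem_setOf_eq, norm_sub_rev]
          exact this
    · rintro ⟨h1, h2⟩
      exact ⟨⟨p, rfl, caus_of_cone h1⟩, ⟨q, rfl, causPast_of_cone h2⟩⟩
  rw [hset]
  refine IsCompact.of_isClosed_subset
    ((isCompact_Icc (a := p.1) (b := q.1)).prod (isCompact_closedBall p.2 (q.1 - p.1))) ?_ ?_
  · exact (isClosed_le ((continuous_snd.sub continuous_const).norm)
        (continuous_fst.sub continuous_const)).inter
      (isClosed_le ((continuous_snd.sub continuous_const).norm)
        (continuous_const.sub continuous_fst))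
  · rintro x ⟨h1, h2⟩
    rw [mem_setOf_eq] at h1 h2
    have h3 := norm_nonneg (x.2 - p.2)
    have h4 := norm_nonneg (x.2 - q.2)
    rw [Set.mem_prod]
    exact ⟨⟨by linarith, by linarith⟩,
      by rw [Metric.mem_closedBall, dist_eq_norm]; linarith⟩
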